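/- Let η: ℝ → ℝ be differentiable with η'(θ) > 0 for all θ. Then there do not exist λ ≠ 0 and α ∈ ℝ such that η'(θ) = −(λ/2)(η(θ)+α)² for all θ ∈ ℝ. -/

import Mathlib

theorem no_double_root_riccati (η : ℝ → ℝ)
    (hdiff : Differentiable ℝ η)
    (hpos : ∀ θ, 0 < deriv η θ) :
    ¬∃ (lam α : ℝ), lam ≠ 0 ∧ ∀ θ, deriv η θ = -(lam / 2) * (η θ + α) ^ 2 := by
  rintro ⟨lam, α, hlam, heq⟩
  have hne : ∀ θ, η θ + α ≠ 0 := by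
    intro θ h
    have h2 := hpos θ
    rw [heq θ, h] at h2
    simp at h2
  set g : ℝ → ℝ := fun θ => (η θ + α)⁻¹ with hg
  have hgd : ∀ θ, HasDerivAt g (lam / 2) θ := by
    intro θ
    have h1 : HasDerivAt (fun x => η x + α) (deriv η θ) θ :=
      ((hdiff θ).hasDerivAt).add_const α
    have h2 := h1.inv (hne θ)
    have h3 : -deriv η θ / (η θ + α) ^ 2 = lam / 2 := by
      rw [heq θ]
      field_simp [hne θ]
    rwa [h3] at h2
  have key : ∀ θ, g θ = g 0 + (lam / 2) * θ := by
    intro θ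
    have hd : ∀ x, HasDerivAt (fun t => g t - lam / 2 * t) 0 x := by
      intro x
      have := (hgd x).sub ((hasDerivAt_id x).const_mul (lam / 2))
      exact (by simpa using this : HasDerivAt (g - fun y => lam / 2 * y) 0 x)
    have hconst := is_const_of_deriv_eq_zero (f := fun t => g t - lam / 2 * t)
      (fun x => (hd x).differentiableAt) (fun x => (hd x).deriv) θ 0
    simp only [mul_zero, sub_zero] at hconst
    linarith [hconst]
  have h0 : g (-(2 * g 0 / lam)) = 0 := by
    rw [key]
    field_simp
    ring
  exact hne _ (by simpa [hg, inv_eq_zero] using h0)
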